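/- Let n ≥ 1, ω_0,...,ω_n > 0, and regard each h^n_i as a function of t on (0,1). Then for every i with 1 ≤ i ≤ n and every t ∈ (0,1), the derivative satisfies (h^n_i)'(t) · (ω_{i-1}·i·(1-t) + ω_i·t·(n-i+1)·h^n_{i-1}(t)) = ω_{i-1}·i·h^n_i(t) + ω_i·(n-i+1)·(1 - h^n_i(t))·(t·(h^n_{i-1})'(t) + h^n_{i-1}(t)), with (h^n_0)' ≡ 0. -/

import Mathlib

open Finset

/-- The `k`-th Bernstein polynomial of degree `n`. -/
noncomputable def bern (n k : ℕ) (t : ℝ) : ℝ :=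
  (n.choose k : ℝ) * t ^ k * (1 - t) ^ (n - k)

noncomputable def bern' (n k : ℕ) (t : ℝ) : ℝ :=
  ((k : ℝ) - n * t) * bern n k t / (t * (1 - t))

lemma cast_mul_pow_sub_one (m : ℕ) (x : ℝ) :
    (m : ℝ) * x ^ (m - 1) * x = m * x ^ m := by
  cases m with
  | zero => simp
  | succ m => rw [Nat.succ_sub_one, pow_succ]; ring

lemma bern_pos (n k : ℕ) (hk : k ≤ n) {t : ℝ} (ht0 : 0 < t) (ht1 : t < 1) :
    0 < bern n k t := by
  have h := Nat.choose_pos hk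
  unfold bern
  have : (0:ℝ) < 1 - t := by linarith
  positivity

lemma bern_hasDerivAt (n k : ℕ) (hk : k ≤ n) {t : ℝ} (ht0 : 0 < t) (ht1 : t < 1) :
    HasDerivAt (bern n k) (bern' n k t) t := by
  have ht : t ≠ 0 := ht0.ne'
  have h1t : (1:ℝ) - t ≠ 0 := by linarith
  have h1 : HasDerivAt (fun s : ℝ => s ^ k) ((k : ℝ) * t ^ (k - 1)) t := hasDerivAt_pow k t
  have h2 : HasDerivAt (fun s : ℝ => (1 - s) ^ (n - k))
      (((n - k : ℕ) : ℝ) * (1 - t) ^ (n - k - 1) * (-1)) t :=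
    by
      have hinner : HasDerivAt (fun s : ℝ => 1 - s) (-1) t := by
        simpa using (hasDerivAt_id t).const_sub (1:ℝ)
      exact (hasDerivAt_pow (n - k) (1 - t)).comp t hinner
  have h3 := (h1.mul h2).const_mul ((n.choose k : ℝ))
  have hfeq : bern n k = fun s : ℝ => (n.choose k : ℝ) * (s ^ k * (1 - s) ^ (n - k)) := by
    funext s; unfold bern; ring
  rw [hfeq]
  refine h3.congr_deriv (Eq.symm ?_)
  unfold bern'
  rw [div_eq_iff (mul_ne_zero ht h1t)]
  unfold bern
  have e1 := cast_mul_pow_sub_one k t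
  have e2 := cast_mul_pow_sub_one (n - k) (1 - t)
  have e3 : ((n - k : ℕ) : ℝ) = (n : ℝ) - k := by
    rw [Nat.cast_sub hk]
  rw [e3] at e2 ⊢
  linear_combination (-((n.choose k : ℝ) * (1 - t) ^ (n - k) * (1 - t))) * e1
    + ((n.choose k : ℝ) * t ^ k * t) * e2


/-- The quantity `h^n_i(t)`, with `h^n_0(t) := 1`. -/
noncomputable def hfun (n : ℕ) (ω : ℕ → ℝ) (i : ℕ) (t : ℝ) : ℝ :=
  if i = 0 then 1
  else ω i * bern n i t / ∑ k ∈ range (i + 1), ω k * bern n k t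

lemma S_pos (n i : ℕ) (hi : i ≤ n) (ω : ℕ → ℝ) (hω : ∀ k ≤ n, 0 < ω k)
    {t : ℝ} (ht0 : 0 < t) (ht1 : t < 1) :
    0 < ∑ k ∈ range (i + 1), ω k * bern n k t := by
  apply Finset.sum_pos
  · intro k hk
    have hk' : k ≤ n := le_trans (Nat.lt_succ_iff.mp (mem_range.mp hk)) hi
    exact mul_pos (hω k hk') (bern_pos n k hk' ht0 ht1)
  · exact ⟨0, by simp⟩

lemma S_hasDerivAt (n i : ℕ) (hi : i ≤ n) (ω : ℕ → ℝ)
    {t : ℝ} (ht0 : 0 < t) (ht1 : t < 1) :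
    HasDerivAt (fun s => ∑ k ∈ range (i + 1), ω k * bern n k s)
      (∑ k ∈ range (i + 1), ω k * bern' n k t) t := by
  apply HasDerivAt.fun_sum
  intro k hk
  have hk' : k ≤ n := le_trans (Nat.lt_succ_iff.mp (mem_range.mp hk)) hi
  exact (bern_hasDerivAt n k hk' ht0 ht1).const_mul (ω k)

lemma hfun_eq (n : ℕ) (ω : ℕ → ℝ) (j : ℕ) (hj : 1 ≤ j) :
    hfun n ω j = fun s => ω j * bern n j s / ∑ k ∈ range (j + 1), ω k * bern n k s := by
  funext s
  rw [hfun, if_neg (by omega)]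

lemma hfun_hasDerivAt (n : ℕ) (ω : ℕ → ℝ) (hω : ∀ k ≤ n, 0 < ω k) (j : ℕ)
    (hj1 : 1 ≤ j) (hjn : j ≤ n) {t : ℝ} (ht0 : 0 < t) (ht1 : t < 1) :
    deriv (hfun n ω j) t =
      (ω j * bern' n j t * (∑ k ∈ range (j + 1), ω k * bern n k t)
        - ω j * bern n j t * (∑ k ∈ range (j + 1), ω k * bern' n k t))
        / (∑ k ∈ range (j + 1), ω k * bern n k t) ^ 2 := by
  rw [hfun_eq n ω j hj1]
  exact (((bern_hasDerivAt n j hjn ht0 ht1).const_mul (ω j)).div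
    (S_hasDerivAt n j hjn ω ht0 ht1) (S_pos n j hjn ω hω ht0 ht1).ne').deriv

lemma hfun_zero (n : ℕ) (ω : ℕ → ℝ) : hfun n ω 0 = fun _ => (1:ℝ) := by
  funext s; simp [hfun]

lemma bern_rec (n i : ℕ) (hi1 : 1 ≤ i) (hin : i ≤ n) (t : ℝ) :
    (i:ℝ) * (1 - t) * bern n i t = ((n:ℝ) - i + 1) * t * bern n (i-1) t := by
  obtain ⟨j, rfl⟩ : ∃ j, i = j + 1 := ⟨i - 1, by omega⟩
  have hcast : ((n.choose (j+1) : ℝ)) * ((j:ℝ)+1) = (n.choose j : ℝ) * ((n:ℝ) - j) := by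
    have h := congrArg (Nat.cast : ℕ → ℝ) (Nat.choose_succ_right_eq n j)
    push_cast [Nat.cast_sub (by omega : j ≤ n)] at h
    linarith [h]
  unfold bern
  have h1 : n - j = (n - (j+1)) + 1 := by omega
  have h2 : (j+1) - 1 = j := rfl
  rw [h2, h1, pow_succ, pow_succ]
  have h3 : ((n:ℝ) - (↑(j+1)) + 1) = (n:ℝ) - j := by push_cast; ring
  rw [h3]
  push_cast
  linear_combination (t^j * t * (1-t) * (1-t)^(n-(j+1))) * hcast

lemma hfun_val (n : ℕ) (ω : ℕ → ℝ) (hω : ∀ k ≤ n, 0 < ω k) (j : ℕ)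
    (hjn : j ≤ n) {t : ℝ} (ht0 : 0 < t) (ht1 : t < 1) :
    hfun n ω j t = ω j * bern n j t / ∑ k ∈ range (j + 1), ω k * bern n k t := by
  rcases Nat.eq_zero_or_pos j with rfl | hj
  · rw [hfun_zero, Finset.sum_range_one]
    exact (div_self (mul_pos (hω 0 (by omega)) (bern_pos n 0 (by omega) ht0 ht1)).ne').symm
  · rw [hfun_eq n ω j hj]

lemma hfun_deriv_val (n : ℕ) (ω : ℕ → ℝ) (hω : ∀ k ≤ n, 0 < ω k) (j : ℕ)
    (hjn : j ≤ n) {t : ℝ} (ht0 : 0 < t) (ht1 : t < 1) :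
    deriv (hfun n ω j) t =
      (ω j * bern' n j t * (∑ k ∈ range (j + 1), ω k * bern n k t)
        - ω j * bern n j t * (∑ k ∈ range (j + 1), ω k * bern' n k t))
        / (∑ k ∈ range (j + 1), ω k * bern n k t) ^ 2 := by
  rcases Nat.eq_zero_or_pos j with rfl | hj
  · rw [hfun_zero, Finset.sum_range_one, Finset.sum_range_one, deriv_const]
    ring
  · exact hfun_hasDerivAt n ω hω j hj hjn ht0 ht1

set_option maxRecDepth 10000 in
set_option maxHeartbeats 2000000 in
lemma key2 (v w N I t C S Sp B Bi Bp Bip Si Sip : ℝ)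
    (h1 : t ≠ 0) (h2 : 1 - t ≠ 0) (h3 : S ≠ 0) (hSine : Si ≠ 0)
    (hB : B = I * (1 - t) * C)
    (hBi : Bi = (N - I + 1) * t * C)
    (hBp : Bp = ((I - 1) - N * t) * B / (t * (1 - t)))
    (hBip : Bip = (I - N * t) * Bi / (t * (1 - t)))
    (hSi : Si = S + w * Bi)
    (hSip : Sip = Sp + w * Bip) :
    (w * Bip * Si - w * Bi * Sip) / Si ^ 2 *
        (v * I * (1 - t) + w * t * (N - I + 1) * (v * B / S)) =
      v * I * (w * Bi / Si)
        + w * (N - I + 1) * (1 - w * Bi / Si) *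
            (t * ((v * Bp * S - v * B * Sp) / S ^ 2) + v * B / S) := by
  subst hBip hBp hSip hB hBi
  field_simp
  subst hSi
  ring

/-- differential-recurrence relation for the first derivative of `h^n_i`,
with `(h^n_0)' ≡ 0`. -/
theorem hfun_first_deriv_recurrence (n : ℕ) (hn : 1 ≤ n) (ω : ℕ → ℝ)
    (hω : ∀ k ≤ n, 0 < ω k) :
    (∀ s : ℝ, deriv (hfun n ω 0) s = 0)
    ∧ ∀ i, 1 ≤ i → i ≤ n → ∀ t : ℝ, 0 < t → t < 1 →
        deriv (hfun n ω i) t *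
            (ω (i - 1) * i * (1 - t) + ω i * t * ((n : ℝ) - i + 1) * hfun n ω (i - 1) t) =
          ω (i - 1) * i * hfun n ω i t
            + ω i * ((n : ℝ) - i + 1) * (1 - hfun n ω i t) *
                (t * deriv (hfun n ω (i - 1)) t + hfun n ω (i - 1) t) := by
  constructor
  · intro s; rw [hfun_zero, deriv_const]
  · intro i hi1 hin t ht0 ht1
    have hjn : i - 1 ≤ n := by omega
    have hii : i - 1 + 1 = i := by omega
    have ht1' : (0:ℝ) < 1 - t := by linarith
    have hS_pos := S_pos n (i-1) hjn ω hω ht0 ht1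
    have hSi_pos := S_pos n i hin ω hω ht0 ht1
    have hiR : (i:ℝ) ≠ 0 := by positivity
    -- rewrite the four hfun occurrences
    rw [hfun_deriv_val n ω hω i hin ht0 ht1, hfun_deriv_val n ω hω (i-1) hjn ht0 ht1,
        hfun_val n ω hω i hin ht0 ht1, hfun_val n ω hω (i-1) hjn ht0 ht1]
    -- split the sums over range (i+1)
    have hsplit : (∑ k ∈ range (i + 1), ω k * bern n k t)
        = (∑ k ∈ range (i - 1 + 1), ω k * bern n k t) + ω i * bern n i t := by
      rw [Finset.sum_range_succ, hii]
    have hsplit' : (∑ k ∈ range (i + 1), ω k * bern' n k t)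
        = (∑ k ∈ range (i - 1 + 1), ω k * bern' n k t) + ω i * bern' n i t := by
      rw [Finset.sum_range_succ, hii]
    rw [hsplit, hsplit']
    have hSine : (∑ k ∈ range (i - 1 + 1), ω k * bern n k t) + ω i * bern n i t ≠ 0 := by
      rw [← hsplit]; exact hSi_pos.ne'
    have hBp' : bern' n (i-1) t
        = (((i:ℝ) - 1) - n * t) * bern n (i-1) t / (t * (1 - t)) := by
      rw [bern', Nat.cast_sub hi1]; norm_num
    set Cc := bern n (i-1) t / ((i:ℝ) * (1 - t)) with hC
    have hB : bern n (i-1) t = (i:ℝ) * (1 - t) * Cc := by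
      rw [hC]; field_simp
    have hBi : bern n i t = ((n:ℝ) - i + 1) * t * Cc := by
      rw [hC, mul_div_assoc']
      rw [eq_div_iff (mul_ne_zero hiR ht1'.ne')]
      linear_combination bern_rec n i hi1 hin t
    exact key2 (ω (i-1)) (ω i) n i t Cc
      (∑ k ∈ range (i - 1 + 1), ω k * bern n k t)
      (∑ k ∈ range (i - 1 + 1), ω k * bern' n k t)
      (bern n (i-1) t) (bern n i t) (bern' n (i-1) t) (bern' n i t) _ _
      ht0.ne' ht1'.ne' hS_pos.ne' hSine hB hBi hBp' rfl rfl rfl
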